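/- Let T be an invertible m×m complex matrix, γ a row vector with γ·e = 1 (where e is the all-ones column vector), and set 𝐓 = -T·e. If η is a complex number such that det(cμ·e·γ + T - cη·I) = 0 and cη is not an eigenvalue of T (so cη·I - T is invertible), then (μ - η)/μ = γ·(cη·I - T)⁻¹·𝐓. -/

import Mathlib

open Matrix

/-- Lemma B.1: if `det(cμ·e·γ + T - cη·I) = 0` and `cη·I - T` is invertible, then
`(μ - η)/μ = γ·(cη·I - T)⁻¹·𝐓` where `𝐓 = -T·e`. -/
theorem stmt_0 {m : ℕ} (c : ℕ) (hc : 0 < c) (μ : ℂ) (hμ : μ ≠ 0)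
    (T : Matrix (Fin m) (Fin m) ℂ) (hT : IsUnit T.det)
    (γ : Fin m → ℂ) (hγ : γ ⬝ᵥ (fun _ => (1 : ℂ)) = 1)
    (η : ℂ)
    (hdet : (((c : ℂ) * μ) • vecMulVec (fun _ => (1 : ℂ)) γ + T - ((c : ℂ) * η) • 1).det = 0)
    (hinv : IsUnit (((c : ℂ) * η) • (1 : Matrix (Fin m) (Fin m) ℂ) - T).det) :
    (μ - η) / μ =
      γ ⬝ᵥ ((((c : ℂ) * η) • (1 : Matrix (Fin m) (Fin m) ℂ) - T)⁻¹).mulVec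
        (-(T.mulVec fun _ => (1 : ℂ))) := by
  set e : Fin m → ℂ := fun _ => (1 : ℂ) with he
  set A : Matrix (Fin m) (Fin m) ℂ := ((c : ℂ) * η) • 1 - T with hA
  set B : Matrix (Fin m) (Fin m) ℂ := T - ((c : ℂ) * η) • 1 with hB
  have hcμ : (c : ℂ) * μ ≠ 0 := mul_ne_zero (Nat.cast_ne_zero.mpr hc.ne') hμ
  have hcc : (c : ℂ) ≠ 0 := Nat.cast_ne_zero.mpr hc.ne'
  have hBA : B = -A := by simp [hA, hB]
  have hBdet : IsUnit B.det := by
    rw [hBA, det_neg]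
    exact (isUnit_one.neg.pow _).mul hinv
  have hAB : A⁻¹ = -(B⁻¹) := by
    apply inv_eq_right_inv
    rw [Matrix.mul_neg, ← Matrix.neg_mul, ← hBA, mul_nonsing_inv _ hBdet]
  have h1 : (((c : ℂ) * μ) • vecMulVec e γ + T - ((c : ℂ) * η) • 1)
      = B + replicateCol Unit (((c : ℂ) * μ) • e) * replicateRow Unit γ := by
    rw [vecMulVec_eq Unit]
    ext i j
    simp [hB, Matrix.mul_apply, mul_comm, mul_assoc]
    ring
  have h2 : (1 + replicateRow Unit γ * B⁻¹ * replicateCol Unit (((c : ℂ) * μ) • e) :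
      Matrix Unit Unit ℂ).det = 0 := by
    have := hdet
    rw [h1, det_add_replicateCol_mul_replicateRow hBdet] at this
    exact (mul_eq_zero.mp this).resolve_left hBdet.ne_zero
  have h3 : 1 + γ ⬝ᵥ B⁻¹.mulVec (((c : ℂ) * μ) • e) = 0 := by
    rw [det_unique, ← replicateRow_vecMul, Matrix.add_apply, Matrix.one_apply_eq, replicateRow_mul_replicateCol_apply, ← dotProduct_mulVec] at h2
    simpa using h2
  rw [mulVec_smul, dotProduct_smul, smul_eq_mul] at h3
  have key : γ ⬝ᵥ A⁻¹.mulVec e = 1 / ((c : ℂ) * μ) := by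
    rw [hAB, neg_mulVec, dotProduct_neg]
    rw [eq_div_iff hcμ]
    linear_combination -h3
  have hTe : -(T.mulVec e) = A.mulVec e - ((c : ℂ) * η) • e := by
    rw [hA, sub_mulVec, smul_mulVec, one_mulVec]
    abel
  rw [hTe, mulVec_sub, dotProduct_sub, mulVec_mulVec, nonsing_inv_mul _ hinv, one_mulVec,
    hγ, mulVec_smul, dotProduct_smul, smul_eq_mul, key]
  field_simp
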